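/- In a diagnosis setting that is a weak model of failure, diagnoses are upward closed: if Δ ⊆ 𝔠 is a diagnosis and Δ ⊆ Δ' ⊆ 𝔠, then Δ' is a diagnosis. -/
import Mathlib


/-- A propositional formula, identified with the set of valuations satisfying it. -/
abbrev PropFormula (V : Type*) := (V → Bool) → Prop

/-- A set of formulas is consistent if some valuation satisfies all of them. -/
def Consistent {V : Type*} (T : Set (PropFormula V)) : Prop :=
  ∃ v : V → Bool, ∀ φ ∈ T, φ v

/-- A consistency-based diagnosis setting: a finite set of components, injective
abnormality variables, a model `M`, and an observation `Obs`. -/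
structure DiagSetting (V α : Type*) where
  comps : Finset α
  ab : α → V
  ab_inj : Function.Injective ab
  M : Set (PropFormula V)
  Obs : Set (PropFormula V)

variable {V α : Type*} [DecidableEq α]

/-- `Th(Δ) = M ∪ Obs ∪ { ab C is true : C ∈ Δ } ∪ { ab C is false : C ∈ 𝔠 \ Δ }`. -/
def DiagSetting.Th (S : DiagSetting V α) (Δ : Finset α) : Set (PropFormula V) :=
  S.M ∪ S.Obs ∪ {φ | ∃ C ∈ Δ, φ = fun v => v (S.ab C) = true}
    ∪ {φ | ∃ C ∈ S.comps \ Δ, φ = fun v => v (S.ab C) = false}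

/-- `Δ` is a diagnosis if `Δ ⊆ 𝔠` and `Th(Δ)` is consistent. -/
def DiagSetting.Diagnosis (S : DiagSetting V α) (Δ : Finset α) : Prop :=
  Δ ⊆ S.comps ∧ Consistent (S.Th Δ)

/-- A diagnosis is minimal if no proper subset of it is a diagnosis. -/
def DiagSetting.MinimalDiagnosis (S : DiagSetting V α) (Δ : Finset α) : Prop :=
  S.Diagnosis Δ ∧ ∀ Δ' ⊂ Δ, ¬ S.Diagnosis Δ'

/-- `C` is a counterfactual cause if `Th({C})` is consistent. -/
def DiagSetting.CounterfactualCause (S : DiagSetting V α) (C : α) : Prop :=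
  C ∈ S.comps ∧ Consistent (S.Th {C})

/-- `Γ ⊆ 𝔠 \ {C}` is a contingency set for `C ∈ 𝔠` if `Th(Γ)` is inconsistent
and `Th(Γ ∪ {C})` is consistent. -/
def DiagSetting.ContingencySet (S : DiagSetting V α) (C : α) (Γ : Finset α) : Prop :=
  C ∈ S.comps ∧ Γ ⊆ S.comps.erase C ∧ ¬ Consistent (S.Th Γ) ∧ Consistent (S.Th (insert C Γ))

/-- `C` is an actual cause if it has a contingency set. -/
def DiagSetting.ActualCause (S : DiagSetting V α) (C : α) : Prop :=
  ∃ Γ : Finset α, S.ContingencySet C Γ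

/-- A contingency set for `C` is minimal if no proper subset is a contingency set for `C`. -/
def DiagSetting.MinimalContingencySet (S : DiagSetting V α) (C : α) (Γ : Finset α) : Prop :=
  S.ContingencySet C Γ ∧ ∀ Γ' ⊂ Γ, ¬ S.ContingencySet C Γ'

/-- The truth value of `φ` does not depend on any abnormality variable `ab C'`, `C' ∈ 𝔠`. -/
def DiagSetting.IndepAb (S : DiagSetting V α) (φ : PropFormula V) : Prop :=
  ∀ v v' : V → Bool, (∀ x : V, (∀ C ∈ S.comps, S.ab C ≠ x) → v x = v' x) → (φ v ↔ φ v')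

/-- A weak model of failure: every formula of `M` is semantically of the form
`(ab C is true) ∨ ψ` with `ψ` independent of the abnormality variables, and every
formula of `Obs` is independent of the abnormality variables. -/
def DiagSetting.WeakModel (S : DiagSetting V α) : Prop :=
  (∀ φ ∈ S.M, ∃ C ∈ S.comps, ∃ ψ : PropFormula V,
      S.IndepAb ψ ∧ ∀ v, φ v ↔ (v (S.ab C) = true ∨ ψ v)) ∧
  (∀ φ ∈ S.Obs, S.IndepAb φ)

open Classical in
/-- Responsibility: `1/(1+|Γ|)` for a minimum-cardinality contingency set `Γ` for `C`
if `C` is an actual cause, and `0` otherwise. -/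
noncomputable def DiagSetting.Resp (S : DiagSetting V α) (C : α) : ℚ :=
  if S.ActualCause C then
    1 / (1 + ((sInf {n : ℕ | ∃ Γ : Finset α, S.ContingencySet C Γ ∧ Γ.card = n} : ℕ) : ℚ))
  else 0

/-- In a weak model of failure, diagnoses are upward closed. -/
theorem diagnosis_upward_closed
    (S : DiagSetting V α) (hW : S.WeakModel) (Δ Δ' : Finset α)
    (hΔ : S.Diagnosis Δ) (hsub : Δ ⊆ Δ') (hsub' : Δ' ⊆ S.comps) :
    S.Diagnosis Δ' := by
  classical
  obtain ⟨hΔc, v, hv⟩ := hΔ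
  refine ⟨hsub', ?_⟩
  set v' : V → Bool := fun x => if ∃ C ∈ Δ', S.ab C = x then true else v x with hv'
  have hkeep : ∀ x : V, (∀ C ∈ Δ', S.ab C ≠ x) → v' x = v x := by
    intro x hx
    simp only [hv']
    rw [if_neg]
    rintro ⟨C, hC, hCx⟩
    exact hx C hC hCx
  have hindep : ∀ φ : PropFormula V, S.IndepAb φ → (φ v ↔ φ v') := by
    intro φ hφ
    exact hφ v v' (fun x hx => (hkeep x (fun C hC => hx C (hsub' hC))).symm)
  refine ⟨v', ?_⟩
  rintro φ (((hM | hObs) | ⟨C, hC, rfl⟩) | ⟨C, hC, rfl⟩)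
  · obtain ⟨C, hCc, ψ, hψ, hφ⟩ := hW.1 φ hM
    have h1 : φ v := hv φ (Or.inl (Or.inl (Or.inl hM)))
    rw [hφ] at h1 ⊢
    rcases h1 with h1 | h1
    · left
      by_cases hCΔ : C ∈ Δ
      · simp only [hv']
        rw [if_pos ⟨C, hsub hCΔ, rfl⟩]
      · have : v (S.ab C) = false :=
          hv _ (Or.inr ⟨C, Finset.mem_sdiff.mpr ⟨hCc, hCΔ⟩, rfl⟩)
        rw [this] at h1; exact absurd h1 (by simp)
    · exact Or.inr ((hindep ψ hψ).mp h1)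
  · exact (hindep φ (hW.2 φ hObs)).mp (hv φ (Or.inl (Or.inl (Or.inr hObs))))
  · simp only [hv']
    rw [if_pos ⟨C, hC, rfl⟩]
  · have hC' := Finset.mem_sdiff.mp hC
    have : v' (S.ab C) = v (S.ab C) := by
      apply hkeep
      intro C' hCmem hne
      exact hC'.2 (S.ab_inj hne ▸ hCmem)
    show v' (S.ab C) = false
    rw [this]
    exact hv _ (Or.inr ⟨C, Finset.mem_sdiff.mpr ⟨hC'.1, fun h => hC'.2 (hsub h)⟩, rfl⟩)
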